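/- If τ[ψ] = λψ and φ is a nonvanishing solution of τ[φ] = λ₀φ with σ = -log φ, then ψ̂ := ψ' + σ'·ψ satisfies τ̂[ψ̂] = λψ̂, where τ̂ is the Schrödinger operator with partner potential Û = U + 2σ''. -/

import Mathlib

/-- if τ[ψ] = λψ and τ[φ] = λ₀φ with φ nonvanishing, σ = -log φ,
then ψ̂ := ψ' + σ'·ψ satisfies τ̂[ψ̂] = λψ̂ where τ̂ has partner potential Û = U + 2σ''. -/
theorem darboux_transforms_eigenfunctions
    (U φ ψ : ℝ → ℝ) (lam0 lam : ℝ)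
    (hU : Differentiable ℝ U)
    (hφ : ContDiff ℝ 3 φ) (hψ : ContDiff ℝ 3 ψ)
    (hφ0 : ∀ x, φ x ≠ 0)
    (heigφ : ∀ x, -(deriv (deriv φ) x) + U x * φ x = lam0 * φ x)
    (heigψ : ∀ x, -(deriv (deriv ψ) x) + U x * ψ x = lam * ψ x)
    (σ Uhat ψhat : ℝ → ℝ)
    (hσ : σ = fun x => -Real.log (φ x))
    (hUhat : Uhat = fun x => U x + 2 * deriv (deriv σ) x)
    (hψhat : ψhat = fun x => deriv ψ x + deriv σ x * ψ x) :
    ∀ x, -(deriv (deriv ψhat) x) + Uhat x * ψhat x = lam * ψhat x := by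
  -- basic differentiability
  have hφd : Differentiable ℝ φ := hφ.differentiable (by norm_num)
  have hψd : Differentiable ℝ ψ := hψ.differentiable (by norm_num)
  have hφ1d : Differentiable ℝ (deriv φ) := by
    have h3 := hφ
    rw [show (3 : WithTop ℕ∞) = 2 + 1 by norm_num] at h3
    have := (contDiff_succ_iff_deriv.mp h3).2.2
    exact this.differentiable (by norm_num)
  have hψ1d : Differentiable ℝ (deriv ψ) := by
    have h3 := hψ
    rw [show (3 : WithTop ℕ∞) = 2 + 1 by norm_num] at h3
    have := (contDiff_succ_iff_deriv.mp h3).2.2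
    exact this.differentiable (by norm_num)
  set Q : ℝ → ℝ := fun x => deriv φ x / φ x with hQdef
  have hQdiff : ∀ x, HasDerivAt Q ((U x - lam0) - Q x * Q x) x := by
    intro x
    have h := ((hφ1d x).hasDerivAt).fun_div ((hφd x).hasDerivAt) (hφ0 x)
    refine h.congr_deriv ?_
    have e1 : deriv (deriv φ) x = (U x - lam0) * φ x := by linarith [heigφ x]
    rw [e1]
    simp only [hQdef]
    field_simp [hQdef, hφ0 x]
  -- first derivative of σ
  have hσ1 : deriv σ = fun x => -Q x := by
    funext x
    rw [hσ]
    exact (((hφd x).hasDerivAt.log (hφ0 x)).neg).deriv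
  -- second derivative of σ
  have hσ2 : deriv (deriv σ) = fun x => Q x * Q x - (U x - lam0) := by
    rw [hσ1]
    funext x
    have := ((hQdiff x).neg).deriv
    erw [this]; ring
  -- ψhat in terms of Q
  have hW : ψhat = fun x => deriv ψ x - Q x * ψ x := by
    rw [hψhat, hσ1]
    funext x; ring
  -- first derivative of ψhat
  have hW1 : deriv ψhat = fun x => (lam0 - lam) * ψ x + Q x * Q x * ψ x - Q x * deriv ψ x := by
    funext x
    rw [hW]
    have h := ((hψ1d x).hasDerivAt).sub ((hQdiff x).mul ((hψd x).hasDerivAt))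
    erw [h.deriv]
    have e2 : deriv (deriv ψ) x = (U x - lam) * ψ x := by linarith [heigψ x]
    rw [e2]; ring
  -- second derivative of ψhat
  have hW2 : ∀ x, deriv (deriv ψhat) x =
      (lam0 - lam) * deriv ψ x
        + (2 * Q x * ((U x - lam0) - Q x * Q x)) * ψ x + Q x * Q x * deriv ψ x
        - (((U x - lam0) - Q x * Q x) * deriv ψ x + Q x * ((U x - lam) * ψ x)) := by
    intro x
    rw [hW1]
    have h := ((((hψd x).hasDerivAt.const_mul (lam0 - lam)).add
        (((hQdiff x).mul (hQdiff x)).mul ((hψd x).hasDerivAt))).sub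
        ((hQdiff x).mul ((hψ1d x).hasDerivAt)))
    erw [h.deriv]
    have e2 : deriv (deriv ψ) x = (U x - lam) * ψ x := by linarith [heigψ x]
    rw [e2, Pi.mul_apply]; ring
  intro x
  rw [hW2 x, hUhat, hσ2, hW]
  ring
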